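/- arXiv:1806.02775 — 2 statements merged into one kernel-verified Lean document; each statement's English description precedes it below -/
import Mathlib

section
/- Let d ≥ 1 and let p, ρ : ℝ^d → ℝ be positive functions that are differentiable at a point x, let φ : ℝ^d → ℝ^d be differentiable at x, and set w(x) = ρ(x)/p(x). Then w(x)·(⟨∇log ρ(x), φ(x)⟩ + div φ(x)) = ⟨∇log p(x), w(x)·φ(x)⟩ + div(w·φ)(x), i.e. w(x)·(S_ρᵀφ)(x) = (S_pᵀ(w·φ))(x). (Theorem 1 of the paper, pointwise identity.) -/
open Real MeasureTheory
open scoped InnerProductSpace BigOperators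

/-- Divergence of a vector field: trace of the Fréchet derivative. -/
noncomputable def divg {d : ℕ} (f : EuclideanSpace ℝ (Fin d) → EuclideanSpace ℝ (Fin d))
    (x : EuclideanSpace ℝ (Fin d)) : ℝ :=
  LinearMap.trace ℝ _ (fderiv ℝ f x : EuclideanSpace ℝ (Fin d) →ₗ[ℝ] EuclideanSpace ℝ (Fin d))

lemma trace_smulRight' {d : ℕ} (ℓ : EuclideanSpace ℝ (Fin d) →ₗ[ℝ] ℝ)
    (v : EuclideanSpace ℝ (Fin d)) :
    LinearMap.trace ℝ _ (ℓ.smulRight v) = ℓ v := by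
  have h : ℓ.smulRight v = dualTensorHom ℝ (EuclideanSpace ℝ (Fin d))
      (EuclideanSpace ℝ (Fin d)) (ℓ ⊗ₜ v) := by
    ext y
    simp [dualTensorHom_apply]
  rw [h, LinearMap.trace_eq_contract_apply, contractLeft_apply]

lemma inner_gradient_log {d : ℕ} (f : EuclideanSpace ℝ (Fin d) → ℝ)
    (x v : EuclideanSpace ℝ (Fin d)) (hf : DifferentiableAt ℝ f x) (hfx : f x ≠ 0) :
    ⟪gradient (fun y => Real.log (f y)) x, v⟫_ℝ = (f x)⁻¹ * fderiv ℝ f x v := by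
  rw [gradient, InnerProductSpace.toDual_symm_apply, fderiv.log hf hfx]
  simp

/-- Theorem 1 of the paper (pointwise identity):
`w(x)·(S_ρᵀφ)(x) = (S_pᵀ(w·φ))(x)` where `w = ρ/p`. -/
theorem gf_svgd_stmt0 (d : ℕ) (hd : 1 ≤ d)
    (p ρ : EuclideanSpace ℝ (Fin d) → ℝ)
    (hp : ∀ y, 0 < p y) (hρ : ∀ y, 0 < ρ y)
    (x : EuclideanSpace ℝ (Fin d))
    (hpd : DifferentiableAt ℝ p x) (hρd : DifferentiableAt ℝ ρ x)
    (φ : EuclideanSpace ℝ (Fin d) → EuclideanSpace ℝ (Fin d))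
    (hφ : DifferentiableAt ℝ φ x)
    (w : EuclideanSpace ℝ (Fin d) → ℝ) (hw : w = fun y => ρ y / p y) :
    w x * (⟪gradient (fun y => Real.log (ρ y)) x, φ x⟫_ℝ + divg φ x)
      = ⟪gradient (fun y => Real.log (p y)) x, w x • φ x⟫_ℝ
        + divg (fun y => w y • φ y) x := by
  have hpx := (hp x).ne'
  have hρx := (hρ x).ne'
  have hwd : DifferentiableAt ℝ w x := by
    rw [hw]; simp only [div_eq_mul_inv]; exact hρd.mul (hpd.inv hpx)
  -- divergence of w • φ
  have hdiv : divg (fun y => w y • φ y) x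
      = w x * divg φ x + fderiv ℝ w x (φ x) := by
    unfold divg
    rw [fderiv_fun_smul hwd hφ]
    push_cast [ContinuousLinearMap.coe_add]
    rw [map_add]
    congr 1
    · simp [LinearMap.map_smul]
    · exact trace_smulRight' _ _
  have hρeq : ρ = fun y => w y * p y := by
    funext y; rw [hw]; rw [div_mul_cancel₀ _ (hp y).ne']
  have hFρ : fderiv ℝ ρ x (φ x)
      = w x * fderiv ℝ p x (φ x) + p x * fderiv ℝ w x (φ x) := by
    conv_lhs => rw [hρeq]
    rw [fderiv_fun_mul hwd hpd]
    simp
  rw [inner_gradient_log ρ x (φ x) hρd hρx, inner_gradient_log p x (w x • φ x) hpd hpx,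
    hdiv, (fderiv ℝ p x).map_smul, hFρ]
  have hwx : ρ x = w x * p x := by rw [hρeq]
  have hwne : w x ≠ 0 := by rw [hw]; positivity
  rw [hwx]
  field_simp
  ring
end

section
/- Let d ≥ 1, let p, ρ : ℝ^d → ℝ be positive functions, differentiable at given points, set w = ρ/p, and let k : ℝ^d → ℝ^d → ℝ be a kernel differentiable in its first argument. Fix particles x_1, …, x_n ∈ ℝ^d. Define the gradient-free SVGD direction at x_i as Δ_i = ∑_{j=1}^n w(x_j)·(∇log ρ(x_j)·k(x_j, x_i) + ∇_{x_j} k(x_j, x_i)), and define the standard SVGD direction with the importance-weighted kernel k̃(x, y) = w(x)·w(y)·k(x, y) as Δ̃_i = ∑_{j=1}^n (∇log p(x_j)·k̃(x_j, x_i) + ∇_{x_j} k̃(x_j, x_i)). Then Δ̃_i = w(x_i)·Δ_i for every i = 1, …, n. Hence the gradient-free SVGD update is, up to the per-particle scalar step factor w(x_i), the standard SVGD update with kernel k̃. -/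
open Real
open scoped InnerProductSpace BigOperators

section aux

variable {d : ℕ}

local notation "E" => EuclideanSpace ℝ (Fin d)

lemma grad_smul_of_fderiv (f : E → ℝ) (x : E) (c : ℝ) (L : E →L[ℝ] ℝ)
    (h : fderiv ℝ f x = c • L) :
    gradient f x = c • (InnerProductSpace.toDual ℝ E).symm L := by
  unfold gradient
  rw [h, map_smul]

lemma grad_log_comp (f : E → ℝ) (x : E) (hf : DifferentiableAt ℝ f x) (hne : f x ≠ 0) :
    gradient (fun y => Real.log (f y)) x = (f x)⁻¹ • gradient f x := by
  have h := (Real.hasDerivAt_log hne).comp_hasFDerivAt x hf.hasFDerivAt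
  have h2 : fderiv ℝ (fun y => Real.log (f y)) x = (f x)⁻¹ • fderiv ℝ f x :=
    HasFDerivAt.fderiv (f := fun y => Real.log (f y)) h
  unfold gradient
  rw [h2, map_smul]

lemma grad_inv_comp (f : E → ℝ) (x : E) (hf : DifferentiableAt ℝ f x) (hne : f x ≠ 0) :
    gradient (fun y => (f y)⁻¹) x = -((f x) ^ 2)⁻¹ • gradient f x := by
  have h := (hasDerivAt_inv hne).comp_hasFDerivAt x hf.hasFDerivAt
  have h2 : fderiv ℝ (fun y => (f y)⁻¹) x = -((f x) ^ 2)⁻¹ • fderiv ℝ f x :=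
    HasFDerivAt.fderiv (f := fun y => (f y)⁻¹) h
  unfold gradient
  rw [h2, map_smul]

lemma grad_mul (f g : E → ℝ) (x : E) (hf : DifferentiableAt ℝ f x)
    (hg : DifferentiableAt ℝ g x) :
    gradient (fun y => f y * g y) x = f x • gradient g x + g x • gradient f x := by
  unfold gradient
  rw [fderiv_fun_mul hf hg, map_add, map_smul, map_smul]

end aux

/-- The gradient-free SVGD direction is, up to the per-particle factor
`w(x_i)`, the standard SVGD direction with the importance-weighted kernel
`k̃(x,y) = w(x)w(y)k(x,y)`: `Δ̃_i = w(x_i)·Δ_i`. -/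
theorem gf_svgd_stmt7 (d : ℕ) (hd : 1 ≤ d)
    (p ρ : EuclideanSpace ℝ (Fin d) → ℝ)
    (hp : ∀ y, 0 < p y) (hρ : ∀ y, 0 < ρ y)
    (k : EuclideanSpace ℝ (Fin d) → EuclideanSpace ℝ (Fin d) → ℝ)
    (hk : ∀ y, Differentiable ℝ (fun z => k z y))
    (w : EuclideanSpace ℝ (Fin d) → ℝ) (hw : w = fun y => ρ y / p y)
    (ktilde : EuclideanSpace ℝ (Fin d) → EuclideanSpace ℝ (Fin d) → ℝ)
    (hktilde : ktilde = fun x y => w x * w y * k x y)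
    (n : ℕ) (x : Fin n → EuclideanSpace ℝ (Fin d))
    (hpd : ∀ j, DifferentiableAt ℝ p (x j))
    (hρd : ∀ j, DifferentiableAt ℝ ρ (x j))
    (Δ Δtilde : Fin n → EuclideanSpace ℝ (Fin d))
    (hΔ : Δ = fun i => ∑ j, w (x j) •
        (k (x j) (x i) • gradient (fun y => Real.log (ρ y)) (x j)
          + gradient (fun y => k y (x i)) (x j)))
    (hΔtilde : Δtilde = fun i => ∑ j,
        (ktilde (x j) (x i) • gradient (fun y => Real.log (p y)) (x j)
          + gradient (fun y => ktilde y (x i)) (x j))) :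
    ∀ i, Δtilde i = w (x i) • Δ i := by
  intro i
  subst hw hktilde hΔ hΔtilde
  simp only
  rw [Finset.smul_sum]
  apply Finset.sum_congr rfl
  intro j _
  have hPne : p (x j) ≠ 0 := (hp _).ne'
  have hRne : ρ (x j) ≠ 0 := (hρ _).ne'
  have hpj := hpd j
  have hρj := hρd j
  have hkj : DifferentiableAt ℝ (fun z => k z (x i)) (x j) := (hk (x i)) (x j)
  have hinvd : DifferentiableAt ℝ (fun y => (p y)⁻¹) (x j) := hpj.inv hPne
  have hwd : DifferentiableAt ℝ (fun y => ρ y / p y) (x j) := by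
    simp only [div_eq_mul_inv]; exact hρj.mul hinvd
  -- gradient of log p, log ρ
  have hglogp := grad_log_comp p (x j) hpj hPne
  have hglogρ := grad_log_comp ρ (x j) hρj hRne
  -- gradient of w = ρ/p
  have hgw : gradient (fun y => ρ y / p y) (x j)
      = (p (x j))⁻¹ • gradient ρ (x j)
        + (ρ (x j) * -((p (x j)) ^ 2)⁻¹) • gradient p (x j) := by
    have h1 : (fun y => ρ y / p y) = fun y => ρ y * (p y)⁻¹ := by
      funext y; rw [div_eq_mul_inv]
    rw [h1, grad_mul ρ (fun y => (p y)⁻¹) (x j) hρj hinvd,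
      grad_inv_comp p (x j) hpj hPne, smul_smul]
    abel
  -- gradient of ktilde(·, x i)
  have hkt : (fun y => (fun y => ρ y / p y) y * (fun y => ρ y / p y) (x i) * k y (x i))
      = fun y => (ρ (x i) / p (x i)) * ((ρ y / p y) * k y (x i)) := by
    funext y; ring
  have hmuld : DifferentiableAt ℝ (fun y => (ρ y / p y) * k y (x i)) (x j) :=
    hwd.mul hkj
  have hgkt : gradient (fun y => (fun y => ρ y / p y) y * (fun y => ρ y / p y) (x i) * k y (x i)) (x j)
      = (ρ (x i) / p (x i)) • ((ρ (x j) / p (x j)) • gradient (fun z => k z (x i)) (x j)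
          + k (x j) (x i) • gradient (fun y => ρ y / p y) (x j)) := by
    rw [hkt]
    unfold gradient
    rw [fderiv_const_mul hmuld, map_smul]
    congr 1
    rw [fderiv_fun_mul hwd hkj, map_add, map_smul, map_smul]
  rw [hglogp, hglogρ, hgkt, hgw]
  have hR : ρ (x j) = (ρ (x j) / p (x j)) * p (x j) := by field_simp
  have hPine : p (x i) ≠ 0 := (hp _).ne'
  have hRine : ρ (x i) ≠ 0 := (hρ _).ne'
  match_scalars <;> field_simp [hPne, hRne, hPine, hRine] <;> ring
end
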